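/- Let G be a finitely generated group with word length L, σ a monotone unbounded map ℕ → [1,∞) with (1+n) ≼ σ, and assume σ is almost submultiplicative. Then the following are equivalent: (i) the surface growth satisfies σ_G ≼ σ; (ii) there exists ρ > 0 such that Σ_{g∈G} σ(L(g))^{-ρ} < ∞. -/
import Mathlib


/-- The coarse growth comparison relation: `f ≼ g` iff there are constants
`c, k ≥ 1` with `f n ≤ c * g (c * n) ^ k` for all `n`. -/
def GrowthLE (f g : ℕ → ℝ) : Prop :=
  ∃ (c : ℕ) (k : ℝ), 1 ≤ c ∧ 1 ≤ k ∧ ∀ n : ℕ, f n ≤ (c : ℝ) * g (c * n) ^ k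


lemma aux_mul_bound (σ : ℕ → ℝ) (hσ1 : ∀ n, 1 ≤ σ n)
    (c₁ : ℝ) (hc₁ : 0 < c₁)
    (hsub : ∀ n m : ℕ, σ (n + m) ≤ c₁ * σ n ^ (2:ℝ) * σ m ^ (2:ℝ)) :
    ∀ c : ℕ, ∃ C K : ℝ, 1 ≤ C ∧ 1 ≤ K ∧ ∀ n, σ (c * n) ≤ C * σ n ^ K := by
  intro c
  induction c with
  | zero =>
    refine ⟨σ 0, 1, hσ1 0, le_refl 1, fun n => ?_⟩
    rw [Real.rpow_one]
    simpa using le_mul_of_one_le_right (le_trans zero_le_one (hσ1 0)) (hσ1 n)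
  | succ c ih =>
    obtain ⟨C, K, hC, hK, hCK⟩ := ih
    refine ⟨max (c₁ * C ^ (2:ℝ)) 1, K * 2 + 2, le_max_right _ _, by nlinarith, fun n => ?_⟩
    have hσpos : ∀ m, (0:ℝ) < σ m := fun m => lt_of_lt_of_le one_pos (hσ1 m)
    have h1 : σ ((c + 1) * n) ≤ c₁ * σ (c * n) ^ (2:ℝ) * σ n ^ (2:ℝ) := by
      have : (c + 1) * n = c * n + n := by ring
      rw [this]; exact hsub (c * n) n
    have h2 : σ (c * n) ^ (2:ℝ) ≤ (C * σ n ^ K) ^ (2:ℝ) :=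
      Real.rpow_le_rpow (hσpos _).le (hCK n) (by norm_num)
    have h3 : (C * σ n ^ K) ^ (2:ℝ) = C ^ (2:ℝ) * σ n ^ (K * 2) := by
      rw [Real.mul_rpow (by linarith) (Real.rpow_nonneg (hσpos n).le _),
        ← Real.rpow_mul (hσpos n).le]
    have h4 : σ n ^ (K * 2) * σ n ^ (2:ℝ) = σ n ^ (K * 2 + 2) := by
      rw [← Real.rpow_add (hσpos n)]
    calc σ ((c + 1) * n) ≤ c₁ * σ (c * n) ^ (2:ℝ) * σ n ^ (2:ℝ) := h1
      _ ≤ c₁ * (C * σ n ^ K) ^ (2:ℝ) * σ n ^ (2:ℝ) := by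
          have h5 := Real.rpow_nonneg (hσpos n).le (2:ℝ)
          exact mul_le_mul_of_nonneg_right (mul_le_mul_of_nonneg_left h2 hc₁.le) h5
      _ = (c₁ * C ^ (2:ℝ)) * σ n ^ (K * 2 + 2) := by rw [h3, ← h4]; ring
      _ ≤ max (c₁ * C ^ (2:ℝ)) 1 * σ n ^ (K * 2 + 2) := by
          apply mul_le_mul_of_nonneg_right (le_max_left _ _)
          exact Real.rpow_nonneg (hσpos n).le _



lemma aux_summable (σ : ℕ → ℝ) (hσ1 : ∀ n, 1 ≤ σ n) (hmono : Monotone σ)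
    (hlin : GrowthLE (fun n : ℕ => (1 : ℝ) + n) σ) :
    ∃ p : ℝ, 0 < p ∧ Summable (fun n : ℕ => σ n ^ (-p)) := by
  obtain ⟨c, k, hc, hk, hb⟩ := hlin
  have hσpos : ∀ m, (0:ℝ) < σ m := fun m => lt_of_lt_of_le one_pos (hσ1 m)
  have hcpos : (0:ℝ) < (c:ℝ) := by exact_mod_cast lt_of_lt_of_le one_pos (by exact_mod_cast hc)
  set A : ℝ := (c:ℝ) ^ 2 with hA
  have hApos : 0 < A := by positivity
  -- claim: (1+m) ≤ A * σ m ^ k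
  have claim : ∀ m : ℕ, (1 + m : ℝ) ≤ A * σ m ^ k := by
    intro m
    set n := m / c with hn
    have h1' : c * n ≤ m := by
      rw [hn, mul_comm]; exact Nat.div_mul_le_self m c
    have h2 : m < (n + 1) * c := by
      rw [hn, mul_comm]; exact Nat.lt_mul_div_succ m (by omega)
    have h3 : (1 + m : ℝ) ≤ (c:ℝ) * (1 + n) := by
      have hcast : ((m:ℝ) + 1) ≤ ((n:ℝ) + 1) * (c:ℝ) := by exact_mod_cast h2
      calc (1 + m : ℝ) = (m:ℝ) + 1 := by ring
        _ ≤ ((n:ℝ) + 1) * (c:ℝ) := hcast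
        _ = (c:ℝ) * (1 + n) := by ring
    have h4 : (1 + n : ℝ) ≤ (c:ℝ) * σ (c * n) ^ k := hb n
    have h5 : σ (c * n) ^ k ≤ σ m ^ k :=
      Real.rpow_le_rpow (hσpos _).le (hmono h1') (by linarith)
    calc (1 + m : ℝ) ≤ (c:ℝ) * (1 + n) := h3
      _ ≤ (c:ℝ) * ((c:ℝ) * σ (c * n) ^ k) := by
          exact mul_le_mul_of_nonneg_left h4 hcpos.le
      _ ≤ A * σ m ^ k := by
          rw [hA]
          have := mul_le_mul_of_nonneg_left h5 (by positivity : (0:ℝ) ≤ (c:ℝ)*(c:ℝ))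
          calc (c:ℝ) * ((c:ℝ) * σ (c*n) ^ k) = (c:ℝ)*(c:ℝ) * σ (c*n)^k := by ring
            _ ≤ (c:ℝ)*(c:ℝ) * σ m ^ k := this
            _ = (c:ℝ)^2 * σ m ^ k := by ring
  refine ⟨2 * k, by linarith, ?_⟩
  -- bound : σ m ^ (-(2k)) ≤ A^2 * (1+m)^(-2)
  have bound : ∀ m : ℕ, σ m ^ (-(2 * k)) ≤ A ^ 2 * (1 + m : ℝ) ^ (-2 : ℝ) := by
    intro m
    have hx : (0:ℝ) < 1 + m := by positivity
    have h1 : (A * σ m ^ k) ^ (-2:ℝ) ≤ (1 + m : ℝ) ^ (-2:ℝ) :=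
      Real.rpow_le_rpow_of_nonpos hx (claim m) (by norm_num)
    have h2 : (A * σ m ^ k) ^ (-2:ℝ) = A ^ (-2:ℝ) * σ m ^ (-(2 * k)) := by
      rw [Real.mul_rpow hApos.le (Real.rpow_nonneg (hσpos m).le _),
        ← Real.rpow_mul (hσpos m).le]
      ring_nf
    rw [h2] at h1
    have hA2 : A ^ (-2:ℝ) = (A ^ 2)⁻¹ := by
      rw [Real.rpow_neg hApos.le]
      congr 1
      rw [show ((2:ℝ) = ((2:ℕ):ℝ)) by norm_num, Real.rpow_natCast]
    rw [hA2] at h1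
    have := mul_le_mul_of_nonneg_left h1 (by positivity : (0:ℝ) ≤ A ^ 2)
    calc σ m ^ (-(2*k)) = A^2 * ((A^2)⁻¹ * σ m ^ (-(2*k))) := by
          field_simp
      _ ≤ A^2 * (1 + m : ℝ) ^ (-2:ℝ) := this
  have hmaj : Summable (fun m : ℕ => A ^ 2 * (1 + m : ℝ) ^ (-2 : ℝ)) := by
    apply Summable.mul_left
    have : Summable (fun m : ℕ => ((m:ℝ)) ^ (-2:ℝ)) :=
      Real.summable_nat_rpow.mpr (by norm_num)
    have h := (summable_nat_add_iff 1).mpr this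
    apply h.congr
    intro m
    push_cast
    ring_nf
  exact Summable.of_nonneg_of_le (fun m => Real.rpow_nonneg (hσpos m).le _) bound hmaj

theorem surface_growth_le_iff_summable
    {G : Type*} [Group G] [Infinite G] (L : G → ℕ)
    (hL1 : L 1 = 0) (hLinv : ∀ g : G, L g⁻¹ = L g)
    (hLsub : ∀ g h : G, L (g * h) ≤ L g + L h)
    (hball : ∀ n : ℕ, {g : G | L g ≤ n}.Finite)
    (σ : ℕ → ℝ) (hσ1 : ∀ n, 1 ≤ σ n) (hmono : Monotone σ)
    (hunbdd : ¬ BddAbove (Set.range σ))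
    (hlin : GrowthLE (fun n : ℕ => (1 : ℝ) + n) σ)
    (halmost : ∀ ε : ℝ, 0 < ε → ∃ c : ℝ, 0 < c ∧
      ∀ n m : ℕ, σ (n + m) ≤ c * σ n ^ ((1 : ℝ) + ε) * σ m ^ ((1 : ℝ) + ε)) :
    GrowthLE (fun n : ℕ => (Set.ncard {g : G | L g = n} : ℝ)) σ ↔
      ∃ ρ : ℝ, 0 < ρ ∧ Summable (fun g : G => σ (L g) ^ (-ρ)) := by
  have hσpos : ∀ m, (0:ℝ) < σ m := fun m => lt_of_lt_of_le one_pos (hσ1 m)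
  have hfib : ∀ n : ℕ, {g : G | L g = n}.Finite := fun n =>
    (hball n).subset (fun g hg => le_of_eq hg)
  have hfibsum : ∀ (n : ℕ) (r : ℝ), ∑ g ∈ (hfib n).toFinset, σ (L g) ^ r
      = (Set.ncard {g : G | L g = n} : ℝ) * σ n ^ r := by
    intro n r
    rw [Set.ncard_eq_toFinset_card _ (hfib n)]
    rw [Finset.sum_congr rfl (fun g hg => by
      have hgn : L g = n := by simpa using (hfib n).mem_toFinset.mp hg
      rw [hgn])]
    rw [Finset.sum_const, nsmul_eq_mul]
  constructor
  · rintro ⟨c, k, hc, hk, hσG⟩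
    obtain ⟨c₁, hc₁, hsub⟩ := halmost 1 one_pos
    have hsub2 : ∀ n m : ℕ, σ (n + m) ≤ c₁ * σ n ^ (2:ℝ) * σ m ^ (2:ℝ) := by
      intro n m
      rw [show (2:ℝ) = 1 + 1 by norm_num]
      exact hsub n m
    obtain ⟨C, K, hC, hK, hCK⟩ := aux_mul_bound σ hσ1 c₁ hc₁ hsub2 c
    obtain ⟨p, hp, hsump⟩ := aux_summable σ hσ1 hmono hlin
    set ρ := K * k + p with hρdef
    have hρ : 0 < ρ := by nlinarith
    refine ⟨ρ, hρ, ?_⟩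
    set D := (c:ℝ) * C ^ k with hD
    have hDpos : 0 < D := by
      have : (0:ℝ) < (c:ℝ) := by exact_mod_cast lt_of_lt_of_le one_pos (by exact_mod_cast hc)
      have : (0:ℝ) < C ^ k := Real.rpow_pos_of_pos (by linarith) k
      positivity
    have hkey : ∀ n : ℕ, (Set.ncard {g : G | L g = n} : ℝ) * σ n ^ (-ρ) ≤ D * σ n ^ (-p) := by
      intro n
      have h1 : (Set.ncard {g : G | L g = n} : ℝ) ≤ (c:ℝ) * σ (c * n) ^ k := hσG n
      have h2 : σ (c * n) ^ k ≤ (C * σ n ^ K) ^ k :=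
        Real.rpow_le_rpow (hσpos _).le (hCK n) (by linarith)
      have h3 : (C * σ n ^ K) ^ k = C ^ k * σ n ^ (K * k) := by
        rw [Real.mul_rpow (by linarith) (Real.rpow_nonneg (hσpos n).le _),
          ← Real.rpow_mul (hσpos n).le]
      have h4 : (Set.ncard {g : G | L g = n} : ℝ) ≤ D * σ n ^ (K * k) := by
        have hcnn : (0:ℝ) ≤ (c:ℝ) := Nat.cast_nonneg c
        calc (Set.ncard {g : G | L g = n} : ℝ) ≤ (c:ℝ) * σ (c * n) ^ k := h1
          _ ≤ (c:ℝ) * (C * σ n ^ K) ^ k := mul_le_mul_of_nonneg_left h2 hcnn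
          _ = D * σ n ^ (K * k) := by rw [h3, hD]; ring
      calc (Set.ncard {g : G | L g = n} : ℝ) * σ n ^ (-ρ)
          ≤ (D * σ n ^ (K * k)) * σ n ^ (-ρ) :=
            mul_le_mul_of_nonneg_right h4 (Real.rpow_nonneg (hσpos n).le _)
        _ = D * σ n ^ (K * k + -ρ) := by
            rw [mul_assoc, ← Real.rpow_add (hσpos n)]
        _ = D * σ n ^ (-p) := by rw [hρdef]; ring_nf
    have hDsum : Summable (fun n : ℕ => D * σ n ^ (-p)) := hsump.mul_left D
    have hDnn : ∀ n, 0 ≤ D * σ n ^ (-p) := fun n =>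
      mul_nonneg hDpos.le (Real.rpow_nonneg (hσpos n).le _)
    apply summable_of_sum_le (c := ∑' n, D * σ n ^ (-p))
      (fun g => Real.rpow_nonneg (hσpos _).le _)
    intro u
    set N := u.sup L with hN
    have hsubset : u ⊆ (hball N).toFinset := fun g hg =>
      (hball N).mem_toFinset.mpr (by simpa using (Finset.le_sup (f := L) hg))
    have hmaps : ∀ g ∈ (hball N).toFinset, L g ∈ Finset.range (N + 1) := fun g hg =>
      Finset.mem_range.mpr (Nat.lt_succ_of_le (by simpa using (hball N).mem_toFinset.mp hg))
    have step3 : ∀ n ∈ Finset.range (N + 1),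
        (hball N).toFinset.filter (fun g => L g = n) = (hfib n).toFinset := by
      intro n hn
      ext g
      simp only [Finset.mem_filter, Set.Finite.mem_toFinset, Set.mem_setOf_eq]
      constructor
      · rintro ⟨_, h⟩; exact h
      · intro h
        exact ⟨h ▸ Nat.lt_succ_iff.mp (Finset.mem_range.mp hn), h⟩
    calc ∑ g ∈ u, σ (L g) ^ (-ρ)
        ≤ ∑ g ∈ (hball N).toFinset, σ (L g) ^ (-ρ) :=
          Finset.sum_le_sum_of_subset_of_nonneg hsubset
            (fun g _ _ => Real.rpow_nonneg (hσpos _).le _)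
      _ = ∑ n ∈ Finset.range (N + 1), ∑ g ∈ (hball N).toFinset.filter (fun g => L g = n),
            σ (L g) ^ (-ρ) := (Finset.sum_fiberwise_of_maps_to hmaps _).symm
      _ = ∑ n ∈ Finset.range (N + 1),
            (Set.ncard {g : G | L g = n} : ℝ) * σ n ^ (-ρ) := by
          refine Finset.sum_congr rfl (fun n hn => ?_)
          rw [step3 n hn, hfibsum n (-ρ)]
      _ ≤ ∑ n ∈ Finset.range (N + 1), D * σ n ^ (-p) :=
          Finset.sum_le_sum (fun n _ => hkey n)
      _ ≤ ∑' n, D * σ n ^ (-p) := Summable.sum_le_tsum _ (fun n _ => hDnn n) hDsum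
  · rintro ⟨ρ, hρ, hsum⟩
    set S := ∑' g : G, σ (L g) ^ (-ρ) with hS
    have hbound : ∀ n : ℕ, (Set.ncard {g : G | L g = n} : ℝ) ≤ S * σ n ^ ρ := by
      intro n
      have h1 : ∑ g ∈ (hfib n).toFinset, σ (L g) ^ (-ρ) ≤ S :=
        Summable.sum_le_tsum _ (fun g _ => Real.rpow_nonneg (hσpos _).le _) hsum
      rw [hfibsum n (-ρ)] at h1
      have h2 := mul_le_mul_of_nonneg_right h1 (Real.rpow_nonneg (hσpos n).le ρ)
      calc (Set.ncard {g : G | L g = n} : ℝ)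
          = (Set.ncard {g : G | L g = n} : ℝ) * (σ n ^ (-ρ) * σ n ^ ρ) := by
            rw [← Real.rpow_add (hσpos n), neg_add_cancel, Real.rpow_zero, mul_one]
        _ = (Set.ncard {g : G | L g = n} : ℝ) * σ n ^ (-ρ) * σ n ^ ρ := by ring
        _ ≤ S * σ n ^ ρ := h2
    refine ⟨max ⌈S⌉₊ 1, max ρ 1, le_max_right _ _, le_max_right _ _, fun n => ?_⟩
    set c' := max ⌈S⌉₊ 1 with hc'
    have hS' : S ≤ (c' : ℝ) := le_trans (Nat.le_ceil S) (by exact_mod_cast le_max_left _ _)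
    have hσle : σ n ^ ρ ≤ σ (c' * n) ^ max ρ 1 := by
      have h1 : σ n ≤ σ (c' * n) := hmono (Nat.le_mul_of_pos_left n (by omega))
      calc σ n ^ ρ ≤ σ (c' * n) ^ ρ := Real.rpow_le_rpow (hσpos n).le h1 hρ.le
        _ ≤ σ (c' * n) ^ max ρ 1 :=
          Real.rpow_le_rpow_of_exponent_le (hσ1 _) (le_max_left _ _)
    calc (Set.ncard {g : G | L g = n} : ℝ) ≤ S * σ n ^ ρ := hbound n
      _ ≤ (c' : ℝ) * σ (c' * n) ^ max ρ 1 :=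
        mul_le_mul hS' hσle (Real.rpow_nonneg (hσpos n).le _)
          (Nat.cast_nonneg c')
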